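/- Let k be a commutative ring, V a symmetric brace algebra over k, and ∘ the binary product X∘Y := X⟨Y⟩. Let c : V → List V → V be the inductively defined extension of ∘. Then the braces coincide with this extension: for all X, A_1,…,A_n ∈ V, X⟨A_1,…,A_n⟩ = c X [A_1,…,A_n]. -/

import Mathlib

/-- The list of arguments `A_j` for `j ∈ f⁻¹(i)`, in increasing order of `j`. -/
def fiberList {V : Type*} {m n : ℕ} (Aa : Fin m → V) (f : Fin m → Fin n) (i : Fin n) :
    List V :=
  ((List.finRange m).filter fun j => f j = i).map Aa

/-- A symmetric brace algebra over `k`: a `k`-module `V` with operations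
`(X, Y_1, …, Y_n) ↦ X⟨Y_1, …, Y_n⟩` (encoded as `br : V → List V → V`), `k`-linear in each
argument, invariant under permutations of the `Y`'s, with `X⟨⟩ = X`, satisfying the symmetric
brace identity
`X⟨Y_1,…,Y_n⟩⟨A_1,…,A_m⟩ = Σ_f X⟨Y_1⟨A_{f⁻¹(1)}⟩, …, Y_n⟨A_{f⁻¹(n)}⟩, A_{f⁻¹(n+1)}⟩`,
the sum ranging over all maps `f : {1,…,m} → {1,…,n+1}`, where the entries of `A_{f⁻¹(n+1)}`
are appended as additional separate arguments of the outer brace. -/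
structure SymBrace (k V : Type*) [CommRing k] [AddCommGroup V] [Module k V] where
  br : V → List V → V
  br_nil : ∀ X : V, br X [] = X
  br_perm : ∀ (X : V) (A A' : List V), A.Perm A' → br X A = br X A'
  br_linear_left : ∀ A : List V, IsLinearMap k fun X : V => br X A
  br_linear_arg : ∀ (X : V) (A B : List V) (a b : k) (Y Z : V),
    br X (A ++ (a • Y + b • Z) :: B) = a • br X (A ++ Y :: B) + b • br X (A ++ Z :: B)
  br_identity : ∀ (X : V) {n m : ℕ} (Y : Fin n → V) (Aa : Fin m → V),
    br (br X (List.ofFn Y)) (List.ofFn Aa) =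
      ∑ f : Fin m → Fin (n + 1),
        br X ((List.ofFn fun i : Fin n =>
          br (Y i) (fiberList Aa f i.castSucc)) ++ fiberList Aa f (Fin.last n))

theorem fiberList_one {V : Type*} {n : ℕ} (Z : V) (j i : Fin n) :
    fiberList (fun _ : Fin 1 => Z) (fun _ => j) i = if j = i then [Z] else [] := by
  have h0 : List.finRange 1 = [0] := rfl
  rw [fiberList, h0]
  by_cases h : j = i <;> simp [h, List.filter]

theorem ofFn_ite_set {V : Type*} {n : ℕ} (Y : Fin n → V) (i₀ : Fin n) (v : V) :
    (List.ofFn fun i => if i₀ = i then v else Y i) = (List.ofFn Y).set i₀ v := by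
  apply List.ext_getElem (by simp)
  intro j h1 h2
  simp only [List.length_ofFn] at h1
  rw [List.getElem_ofFn, List.getElem_set, List.getElem_ofFn]
  by_cases h : (i₀ : ℕ) = j
  · simp [h, Fin.ext_iff]
  · simp [h, Fin.ext_iff]

theorem br_concat {k V : Type*} [CommRing k] [AddCommGroup V] [Module k V]
    (s : SymBrace k V) (X Z : V) (B : List V) :
    s.br X (B ++ [Z]) = s.br (s.br X B) [Z] -
      ∑ i : Fin B.length, s.br X (B.set i (s.br B[i] [Z])) := by
  have h := s.br_identity X (n := B.length) (m := 1) B.get (fun _ => Z)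
  rw [List.ofFn_get] at h
  have hz : (List.ofFn fun _ : Fin 1 => Z) = [Z] := rfl
  rw [hz] at h
  have hsum : ∑ f : Fin 1 → Fin (B.length + 1),
        s.br X ((List.ofFn fun i : Fin B.length =>
          s.br (B.get i) (fiberList (fun _ : Fin 1 => Z) f i.castSucc)) ++
          fiberList (fun _ : Fin 1 => Z) f (Fin.last B.length)) =
      ∑ j : Fin (B.length + 1),
        s.br X ((List.ofFn fun i : Fin B.length =>
          s.br (B.get i) (fiberList (fun _ : Fin 1 => Z) (fun _ => j) i.castSucc)) ++
          fiberList (fun _ : Fin 1 => Z) (fun _ => j) (Fin.last B.length)) :=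
    (Equiv.sum_comp (Equiv.funUnique (Fin 1) (Fin (B.length + 1))).symm _).symm
  rw [hsum, Fin.sum_univ_castSucc] at h
  have hlast : s.br X ((List.ofFn fun i : Fin B.length =>
        s.br (B.get i) (fiberList (fun _ : Fin 1 => Z) (fun _ => Fin.last B.length)
          i.castSucc)) ++
        fiberList (fun _ : Fin 1 => Z) (fun _ => Fin.last B.length) (Fin.last B.length)) =
      s.br X (B ++ [Z]) := by
    congr 1
    congr 1
    · have he : (fun i : Fin B.length =>
          s.br (B.get i) (fiberList (fun _ : Fin 1 => Z) (fun _ => Fin.last B.length)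
            i.castSucc)) = B.get := by
        funext i
        rw [fiberList_one, if_neg (Fin.castSucc_lt_last i).ne', s.br_nil]
      rw [he, List.ofFn_get]
    · rw [fiberList_one, if_pos rfl]
  rw [hlast] at h
  have hcs : ∀ i₀ : Fin B.length,
      s.br X ((List.ofFn fun i : Fin B.length =>
        s.br (B.get i) (fiberList (fun _ : Fin 1 => Z) (fun _ => i₀.castSucc)
          i.castSucc)) ++
        fiberList (fun _ : Fin 1 => Z) (fun _ => i₀.castSucc) (Fin.last B.length)) =
      s.br X (B.set i₀ (s.br B[i₀] [Z])) := by
    intro i₀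
    congr 1
    rw [fiberList_one, if_neg (Fin.castSucc_lt_last i₀).ne, List.append_nil]
    have : (fun i : Fin B.length =>
        s.br (B.get i) (fiberList (fun _ : Fin 1 => Z) (fun _ => i₀.castSucc) i.castSucc)) =
        fun i => if i₀ = i then s.br (B.get i₀) [Z] else B.get i := by
      funext i
      rw [fiberList_one]
      by_cases h' : i₀ = i
      · subst h'; simp [s.br_nil]
      · rw [if_neg (fun hc => h' (Fin.castSucc_injective _ hc)), if_neg h', s.br_nil]
    rw [this, ofFn_ite_set, List.ofFn_get]
    rfl
  rw [Finset.sum_congr rfl (fun i₀ _ => hcs i₀)] at h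
  rw [h]
  abel


namespace PreLieExt

variable {L : Type*} [AddCommGroup L]

/-- Auxiliary version of the extension `c`, processing the list from the head
(i.e. taking the list in reversed order). -/
def cRev (circ : L → L → L) : L → List L → L
  | T, [] => T
  | T, X :: R =>
      circ (cRev circ T R) X -
        (((List.finRange R.length).map fun i => R.set i.1 (circ (R.get i) X)).attach.map
          fun l => cRev circ T l.1).sum
  termination_by T R => R.length
  decreasing_by
  · simp
  · obtain ⟨i, -, h⟩ := List.mem_map.mp l.2
    rw [← h]
    simp

/-- The inductively defined extension `c : L → List L → L` of a binary product `∘` on `L`: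
`c T [] = T`, and
`c T (A ++ [X]) = (c T A) ∘ X - Σ_{i=1}^{n} c T [X_1, …, X_{i-1}, X_i ∘ X, X_{i+1}, …, X_n]`
for `A = [X_1, …, X_n]`.  (This is the operation `T ∘ X_1 ⋯ X_n` of the paper; it is
implemented by recursion on the reversed list.) -/
def c (circ : L → L → L) (T : L) (A : List L) : L :=
  cRev circ T A.reverse

end PreLieExt

theorem reverse_set' {α : Type*} (l : List α) (j : ℕ) (hj : j < l.length) (x : α) :
    (l.set j x).reverse = l.reverse.set (l.length - 1 - j) x := by
  apply List.ext_getElem (by simp)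
  intro i h1 h2
  simp only [List.length_reverse, List.length_set] at h1 h2
  rw [List.getElem_reverse, List.getElem_set, List.getElem_set, List.getElem_reverse]
  simp only [List.length_set]
  split_ifs <;> first | rfl | omega

open PreLieExt in
theorem c_nil' {L : Type*} [AddCommGroup L] (circ : L → L → L) (T : L) :
    c circ T [] = T := by
  simp [c, cRev]

open PreLieExt in
theorem c_concat' {L : Type*} [AddCommGroup L] (circ : L → L → L) (T : L) (B : List L) (Z : L) :
    c circ T (B ++ [Z]) = circ (c circ T B) Z -
      ∑ i : Fin B.length, c circ T (B.set i (circ B[i] Z)) := by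
  rw [c, List.reverse_append, List.reverse_singleton, List.singleton_append, cRev]
  rw [List.attach_map_val, List.map_map, ← List.ofFn_eq_map, List.sum_ofFn]
  rw [← Equiv.sum_comp ((finCongr (List.length_reverse (as := B))).trans Fin.revPerm)
    (fun i : Fin B.length => c circ T (B.set i (circ B[i] Z)))]
  congr 1
  apply Finset.sum_congr rfl
  intro i _
  simp only [Function.comp_apply, Equiv.trans_apply, finCongr_apply, Fin.revPerm_apply, c]
  have hi : (i : ℕ) < B.length := by simpa using i.2
  have hrev : ((Fin.rev (Fin.cast (List.length_reverse (as := B)) i)) : ℕ) = B.length - 1 - i := by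
    simp [Fin.rev]; omega
  rw [hrev]
  have hlt : B.length - 1 - (i : ℕ) < B.length := by omega
  rw [reverse_set' _ _ hlt]
  congr 2
  · omega
  · rw [List.get_eq_getElem, List.getElem_reverse]
    exact congrArg (fun t => circ t Z) (getElem_congr (c := B) rfl hrev.symm _)


open PreLieExt in
/-- Let `k` be a commutative ring, `V` a symmetric brace algebra over `k`,
`∘` the binary product `X ∘ Y := X⟨Y⟩`, and `c : V → List V → V` the inductively defined
extension of `∘`.  Then the braces coincide with this extension:
`X⟨A_1, …, A_n⟩ = c X [A_1, …, A_n]` for all `X, A_1, …, A_n ∈ V`. -/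
theorem symBrace_eq_preLie_extension
    (k V : Type*) [CommRing k] [AddCommGroup V] [Module k V] (s : SymBrace k V) :
    ∀ (X : V) (A : List V), s.br X A = c (fun a b : V => s.br a [b]) X A := by
  have key : ∀ (N : ℕ) (A : List V), A.length = N → ∀ X : V,
      s.br X A = c (fun a b : V => s.br a [b]) X A := by
    intro N
    induction N with
    | zero =>
      intro A hA X
      rw [List.length_eq_zero_iff] at hA
      subst hA
      rw [s.br_nil, c_nil']
    | succ N ih =>
      intro A hA X
      rcases List.eq_nil_or_concat A with rfl | ⟨B, Z, rfl⟩
      · simp at hA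
      · rw [List.concat_eq_append] at hA ⊢
        have hB : B.length = N := by simpa using hA
        rw [br_concat, c_concat']
        congr 1
        · rw [ih B hB X]
        · apply Finset.sum_congr rfl
          intro i _
          exact ih _ (by simpa using hB) X
  intro X A
  exact key A.length A rfl X
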